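/- For every θ ∈ [1/2, 1) and every r ≥ 0, it holds that −θr + log(1−θ+θe^r) ≤ θ(1−θ)r²/2. -/

import Mathlib

/-- Sharpened Hoeffding-lemma exponent bound for `θ ≥ 1/2`:
`-θr + log(1-θ+θe^r) ≤ θ(1-θ)r²/2`. -/
theorem phi_le_of_half_le_theta (θ r : ℝ) (hθ : θ ∈ Set.Ico (1 / 2 : ℝ) 1) (hr : 0 ≤ r) :
    -θ * r + Real.log (1 - θ + θ * Real.exp r) ≤ θ * (1 - θ) * r ^ 2 / 2 := by
  obtain ⟨hθ1, hθ2⟩ := hθ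
  have hθ0 : (0:ℝ) < θ := by linarith
  have h1θ : (0:ℝ) < 1 - θ := by linarith
  set D : ℝ → ℝ := fun x => 1 - θ + θ * Real.exp x with hDdef
  have hD : ∀ x, 0 < D x := fun x => add_pos h1θ (mul_pos hθ0 (Real.exp_pos x))
  have hDd : ∀ x, HasDerivAt D (θ * Real.exp x) x := fun x =>
    ((Real.hasDerivAt_exp x).const_mul θ).const_add (1 - θ)
  set g : ℝ → ℝ := fun x => θ * (1 - θ) * x + θ - θ * Real.exp x / D x with hgdef
  have hgd : ∀ x, HasDerivAt g
      (θ * (1 - θ) - θ * (1 - θ) * Real.exp x / (D x) ^ 2) x := by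
    intro x
    have hnum : HasDerivAt (fun x => θ * Real.exp x) (θ * Real.exp x) x :=
      (Real.hasDerivAt_exp x).const_mul θ
    have hdiv := hnum.div (hDd x) (hD x).ne'
    have hlin : HasDerivAt (fun x => θ * (1 - θ) * x + θ) (θ * (1 - θ)) x := by
      simpa using ((hasDerivAt_id x).const_mul (θ * (1 - θ))).add_const θ
    have h := hlin.sub hdiv
    refine h.congr_deriv ?_
    have hne : (D x) ≠ 0 := (hD x).ne'
    field_simp [hDdef]
    ring
  have hg0 : g 0 = 0 := by
    simp [hgdef, hDdef, Real.exp_zero]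
  -- deriv of g is nonneg on [0, ∞)
  have hgderiv_nonneg : ∀ x ∈ Set.Ici (0:ℝ),
      0 ≤ θ * (1 - θ) - θ * (1 - θ) * Real.exp x / (D x) ^ 2 := by
    intro x hx
    have hy : (1:ℝ) ≤ Real.exp x := Real.one_le_exp hx
    have hkey : Real.exp x ≤ (D x) ^ 2 := by
      have h1 : (0:ℝ) ≤ (θ - 1/2) * (Real.exp x - 1) := by
        apply mul_nonneg <;> linarith
      simp only [hDdef]
      nlinarith [sq_nonneg (Real.exp x - 1)]
    have hfrac : θ * (1 - θ) * Real.exp x / (D x) ^ 2 ≤ θ * (1 - θ) := by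
      rw [div_le_iff₀ (by positivity)]
      exact mul_le_mul_of_nonneg_left hkey (mul_nonneg hθ0.le h1θ.le)
    linarith
  -- g is monotone on [0, ∞), hence nonneg there
  have hgmono : MonotoneOn g (Set.Ici (0:ℝ)) := by
    apply monotoneOn_of_deriv_nonneg (convex_Ici 0)
    · exact fun x _ => (hgd x).continuousAt.continuousWithinAt
    · intro x hx
      exact (hgd x).differentiableAt.differentiableWithinAt
    · intro x hx
      rw [(hgd x).deriv]
      exact hgderiv_nonneg x (interior_subset hx)
  have hgnonneg : ∀ x ∈ Set.Ici (0:ℝ), 0 ≤ g x := by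
    intro x hx
    have := hgmono (Set.self_mem_Ici) hx hx
    rw [hg0] at this
    exact this
  -- the main function f and its derivative g
  set f : ℝ → ℝ := fun x => θ * (1 - θ) * x ^ 2 / 2 + θ * x - Real.log (D x) with hfdef
  have hfd : ∀ x, HasDerivAt f (g x) x := by
    intro x
    have hlog : HasDerivAt (fun x => Real.log (D x)) (θ * Real.exp x / D x) x :=
      (hDd x).log (hD x).ne'
    have hsq : HasDerivAt (fun x : ℝ => x ^ 2) (2 * x) x := by
      simpa using hasDerivAt_pow 2 x
    have hpoly : HasDerivAt (fun x => θ * (1 - θ) * x ^ 2 / 2 + θ * x)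
        (θ * (1 - θ) * (2 * x) / 2 + θ * 1) x :=
      ((hsq.const_mul (θ * (1 - θ))).div_const 2).add ((hasDerivAt_id x).const_mul θ)
    have h := hpoly.sub hlog
    refine h.congr_deriv ?_
    simp only [hgdef]
    ring
  have hf0 : f 0 = 0 := by
    simp [hfdef, hDdef, Real.exp_zero]
  have hfmono : MonotoneOn f (Set.Ici (0:ℝ)) := by
    apply monotoneOn_of_deriv_nonneg (convex_Ici 0)
    · exact fun x _ => (hfd x).continuousAt.continuousWithinAt
    · intro x hx
      exact (hfd x).differentiableAt.differentiableWithinAt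
    · intro x hx
      rw [(hfd x).deriv]
      exact hgnonneg x (interior_subset hx)
  have hfr : 0 ≤ f r := by
    have := hfmono (Set.self_mem_Ici) hr hr
    rw [hf0] at this
    exact this
  simp only [hfdef, hDdef] at hfr
  linarith
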